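/- For 1 ≤ p ≤ q < ∞ and any sequence x = (x_j)_{j∈ℤ} with finite discrete Morrey norm ‖x‖*_{ℓ^p_q}, the step function x̃(t) := Σ_{j∈ℤ} x_j χ_{[j,j+1)}(t) satisfies ‖x‖*_{ℓ^p_q} ≤ ‖x̃‖_{M^p_q(ℝ)} ≤ 2^{1/p−1/q} ‖x‖*_{ℓ^p_q}. -/

import Mathlib

open scoped ENNReal BigOperators

/-- Discrete Morrey norm over symmetric index sets `S_{m,N} = {m-N, …, m+N}`. -/
noncomputable def dnorm (p q : ℝ) (x : ℤ → ℝ) : ℝ≥0∞ :=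
  ⨆ (m : ℤ) (N : ℕ), ((2 * N + 1 : ℝ≥0∞) ^ (1 / q - 1 / p)) *
    ENNReal.ofReal ((∑ j ∈ Finset.Icc (m - N) (m + N), |x j| ^ p) ^ (1 / p))

/-- Discrete Morrey norm over arbitrary index intervals `S*_{k,n} = {k, …, k+n}`. -/
noncomputable def dnormStar (p q : ℝ) (x : ℤ → ℝ) : ℝ≥0∞ :=
  ⨆ (k : ℤ) (n : ℕ), ((n + 1 : ℝ≥0∞) ^ (1 / q - 1 / p)) *
    ENNReal.ofReal ((∑ j ∈ Finset.Icc k (k + n), |x j| ^ p) ^ (1 / p))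

/-- Morrey norm on the real line. -/
noncomputable def mnormR (p q : ℝ) (f : ℝ → ℝ) : ℝ≥0∞ :=
  ⨆ (a : ℝ) (r : Set.Ioi (0 : ℝ)),
    ENNReal.ofReal ((2 * r.1) ^ (1 / q - 1 / p) *
      (∫ t in (a - r.1)..(a + r.1), |f t| ^ p) ^ (1 / p))

/-- The step function `x̃(t) = ∑_j x_j χ_{[j,j+1)}(t)`, i.e. `x̃(t) = x ⌊t⌋`. -/
noncomputable def step (x : ℤ → ℝ) : ℝ → ℝ := fun t => x ⌊t⌋

/-- The set `S_n = {1 + 2^v + ⋯ + 2^{(n-1)v} + j·2^{nw} : j = 1, …, 2^{n(v-w)}}`. -/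
def Sn (v w n : ℕ) : Set ℤ :=
  {m | ∃ j : ℕ, 1 ≤ j ∧ j ≤ 2 ^ (n * (v - w)) ∧
    m = ((∑ i ∈ Finset.range n, 2 ^ (i * v) : ℕ) : ℤ) + (j : ℤ) * 2 ^ (n * w)}

/-- The sequence with `x_j = 1` iff `j ∈ {0,1} ∪ ⋃_{n≥1} S_n`, `x_j = 0` otherwise. -/
noncomputable def xseq (v w : ℕ) : ℤ → ℝ :=
  Set.indicator (({0, 1} : Set ℤ) ∪ ⋃ n ∈ Set.Ici 1, Sn v w n) 1

/-- `β_n = 1 + 2^v + ⋯ + 2^{nv}`. -/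
def beta (v n : ℕ) : ℕ := ∑ i ∈ Finset.range (n + 1), 2 ^ (i * v)

namespace Stmt4Aux

open MeasureTheory intervalIntegral

lemma npos (n : ℕ) : (0:ℝ) < (n:ℝ) + 1 := by positivity

lemma cast_enn (n : ℕ) : ((n:ℝ≥0∞) + 1) = ENNReal.ofReal ((n:ℝ) + 1) := by
  rw [ENNReal.ofReal_add (by positivity) zero_le_one, ENNReal.ofReal_natCast,
    ENNReal.ofReal_one]


lemma floor_eq_on (g : ℤ → ℝ) (j : ℤ) {u v : ℝ} (h1 : (j:ℝ) ≤ u) (h3 : v ≤ (j:ℝ)+1) :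
    ∀ t ∈ Set.Ioo u v, g ⌊t⌋ = g j := by
  intro t ht
  congr 1
  exact Int.floor_eq_iff.mpr ⟨le_trans h1 ht.1.le, lt_of_lt_of_le ht.2 h3⟩

lemma cell_integral (g : ℤ → ℝ) (j : ℤ) {u v : ℝ} (h1 : (j:ℝ) ≤ u) (h2 : u ≤ v)
    (h3 : v ≤ (j:ℝ)+1) : ∫ t in u..v, g ⌊t⌋ = (v - u) * g j := by
  rw [intervalIntegral.integral_of_le h2, MeasureTheory.integral_Ioc_eq_integral_Ioo,
    MeasureTheory.setIntegral_congr_fun measurableSet_Ioo (floor_eq_on g j h1 h3),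
    MeasureTheory.setIntegral_const]
  simp [Real.volume_Ioo, ENNReal.toReal_ofReal (sub_nonneg.2 h2), h2]

lemma cell_integrable (g : ℤ → ℝ) (j : ℤ) {u v : ℝ} (h1 : (j:ℝ) ≤ u) (h2 : u ≤ v)
    (h3 : v ≤ (j:ℝ)+1) : IntervalIntegrable (fun t => g ⌊t⌋) volume u v := by
  rw [intervalIntegrable_iff_integrableOn_Ioc_of_le h2]
  have hc : IntegrableOn (fun _ : ℝ => g j) (Set.Ioo u v) volume :=
    integrableOn_const measure_Ioo_lt_top.ne
  exact ((hc.congr_fun (fun t ht => (floor_eq_on g j h1 h3 t ht).symm)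
    measurableSet_Ioo).congr_set_ae Ioo_ae_eq_Ioc.symm)

lemma range_integrable (g : ℤ → ℝ) (k : ℤ) (n : ℕ) :
    IntervalIntegrable (fun t => g ⌊t⌋) volume (k:ℝ) ((k:ℝ) + (n+1)) := by
  induction n with
  | zero =>
      have := cell_integrable g k (u := (k:ℝ)) (v := (k:ℝ)+1) le_rfl (by linarith) le_rfl
      simpa using this
  | succ n ih =>
      have h2 : IntervalIntegrable (fun t => g ⌊t⌋) volume ((k:ℝ) + (n+1)) ((k:ℝ) + (n+1+1)) := by
        have := cell_integrable g (k + (n+1)) (u := (k:ℝ) + (n+1)) (v := (k:ℝ) + (n+1+1))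
          (by push_cast; ring_nf; rfl) (by linarith) (by push_cast; ring_nf; rfl)
        exact this
      have := ih.trans h2
      convert this using 2 <;> push_cast <;> ring

lemma range_integral (g : ℤ → ℝ) (k : ℤ) (n : ℕ) :
    ∫ t in (k:ℝ)..((k:ℝ) + (n+1)), g ⌊t⌋ = ∑ j ∈ Finset.Icc k (k + n), g j := by
  induction n with
  | zero =>
      have := cell_integral g k (u := (k:ℝ)) (v := (k:ℝ)+1) le_rfl (by linarith) le_rfl
      simpa using this
  | succ n ih =>
      have h2 : ∫ t in ((k:ℝ) + (n+1))..((k:ℝ) + (n+1+1)), g ⌊t⌋ = g (k + (n+1)) := by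
        have := cell_integral g (k + (n+1)) (u := (k:ℝ) + (n+1)) (v := (k:ℝ) + (n+1+1))
          (by push_cast; ring_nf; rfl) (by linarith) (by push_cast; ring_nf; rfl)
        rw [this]; ring
      have hadd := intervalIntegral.integral_add_adjacent_intervals
        (range_integrable g k n)
        (cell_integrable g (k + (n+1)) (u := (k:ℝ) + (n+1)) (v := (k:ℝ) + (n+1+1))
          (by push_cast; ring_nf; rfl) (by linarith) (by push_cast; ring_nf; rfl))
      have hset : Finset.Icc k (k + ((n:ℤ)+1)) = insert (k + ((n:ℤ)+1)) (Finset.Icc k (k+(n:ℤ))) := by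
        ext j; simp [Finset.mem_Icc, Finset.mem_insert]; omega
      have hcast : ((n:ℝ)+1)+1 = ((n+1:ℕ):ℝ)+1 := by push_cast; ring
      rw [← hcast]
      calc ∫ t in (k:ℝ)..((k:ℝ) + ((n+1)+1)), g ⌊t⌋
      _ = (∫ t in (k:ℝ)..((k:ℝ)+(n+1)), g ⌊t⌋) + ∫ t in ((k:ℝ)+(n+1))..((k:ℝ)+(n+1+1)), g ⌊t⌋ := by
          rw [hadd]
      _ = (∑ j ∈ Finset.Icc k (k + n), g j) + g (k + (n+1)) := by rw [ih, h2]
      _ = ∑ j ∈ Finset.Icc k (k + (n+1)), g j := by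
          push_cast
          rw [hset, Finset.sum_insert (by simp)]
          ring

lemma conc (A : ℝ) (hA0 : 0 ≤ A) (hA1 : A ≤ 1) {s : ℝ} (h1 : 1 ≤ s) (h2 : s ≤ 2) :
    (2 - s) + (s - 1) * 2 ^ A ≤ 2 ^ A * s ^ A := by
  have hcon := Real.concaveOn_rpow hA0 hA1
  have h := hcon.2 (Set.mem_Ici.2 zero_le_one) (Set.mem_Ici.2 (by norm_num : (0:ℝ) ≤ 2))
    (by linarith : (0:ℝ) ≤ 2 - s) (by linarith : (0:ℝ) ≤ s - 1) (by ring)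
  simp only [smul_eq_mul, Real.one_rpow] at h
  have hs : (2 - s) * 1 + (s - 1) * 2 = s := by ring
  rw [hs] at h
  have h2A : (1:ℝ) ≤ 2 ^ A := Real.one_le_rpow (by norm_num) hA0
  have hsA : (0:ℝ) ≤ s ^ A := Real.rpow_nonneg (by linarith) A
  nlinarith [h]

lemma core (g : ℤ → ℝ) (hg : ∀ j, 0 ≤ g j) (P A : ℝ) (hP : 0 ≤ P) (hA0 : 0 ≤ A) (hA1 : A ≤ 1)
    (H : ∀ (k : ℤ) (n : ℕ), (∑ j ∈ Finset.Icc k (k + n), g j) ≤ ((n:ℝ)+1) ^ A * P)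
    (a r : ℝ) (hr : 0 < r) :
    ∫ t in (a-r)..(a+r), g ⌊t⌋ ≤ (2*(2*r)) ^ A * P := by
  set u := a - r with hu
  set v := a + r with hv
  have huv : u ≤ v := by rw [hu, hv]; linarith
  set s := 2*r with hsdef
  have hs0 : 0 < s := by rw [hsdef]; linarith
  have hvu : v - u = s := by rw [hu, hv, hsdef]; ring
  set k := ⌊u⌋ with hk
  set m := ⌊v⌋ with hm
  have hkm : k ≤ m := Int.floor_le_floor huv
  set n : ℕ := (m - k).toNat with hn
  have hmn : m = k + n := by rw [hn]; omega
  have hku : (k:ℝ) ≤ u := Int.floor_le u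
  have hmv : (m:ℝ) ≤ v := Int.floor_le v
  have hvm : v < (m:ℝ) + 1 := Int.lt_floor_add_one v
  have huk : u < (k:ℝ) + 1 := Int.lt_floor_add_one u
  have hnr : (n:ℝ) = (m:ℝ) - (k:ℝ) := by
    have h := congrArg (fun z : ℤ => (z:ℝ)) hmn
    push_cast at h; linarith
  have hnlt : (n:ℝ) < s + 1 := by rw [hnr]; linarith
  have hbig : IntervalIntegrable (fun t => g ⌊t⌋) volume (k:ℝ) ((k:ℝ) + (n+1)) :=
    range_integrable g k n
  have hve : v ≤ (k:ℝ) + ((n:ℝ)+1) := by linarith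
  have hIint : IntervalIntegrable (fun t => g ⌊t⌋) volume u v := by
    apply hbig.mono_set
    rw [Set.uIcc_of_le huv, Set.uIcc_of_le (by linarith : (k:ℝ) ≤ (k:ℝ) + ((n:ℝ)+1))]
    exact Set.Icc_subset_Icc hku hve
  have hB : (∫ t in u..v, g ⌊t⌋) ≤ ((n:ℝ)+1) ^ A * P := by
    calc (∫ t in u..v, g ⌊t⌋) ≤ ∫ t in (k:ℝ)..((k:ℝ)+((n:ℝ)+1)), g ⌊t⌋ :=
          intervalIntegral.integral_mono_interval hku huv hve
            (Filter.Eventually.of_forall fun t => hg _) hbig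
    _ = ∑ j ∈ Finset.Icc k (k + n), g j := range_integral g k n
    _ ≤ _ := H k n
  have hgP : ∀ j, g j ≤ P := by
    intro j
    have := H j 0
    simpa using this
  have hA' : (∫ t in u..v, g ⌊t⌋) ≤ s * P := by
    have h1 : (∫ t in u..v, g ⌊t⌋) ≤ ∫ _t in u..v, P := by
      apply intervalIntegral.integral_mono_on huv hIint intervalIntegrable_const
      intro t _; exact hgP _
    rw [intervalIntegral.integral_const, smul_eq_mul, hvu] at h1
    exact h1
  have h2A1 : (1:ℝ) ≤ 2 ^ A := Real.one_le_rpow (by norm_num) hA0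
  have hfin : 2 ^ A * s ^ A * P = (2*s) ^ A * P := by
    rw [Real.mul_rpow (by norm_num) hs0.le]
  rcases le_or_gt s 1 with hs1 | hs1
  · have e1 : s ≤ s ^ A := by
      calc s = s ^ (1:ℝ) := (Real.rpow_one s).symm
      _ ≤ s ^ A := Real.rpow_le_rpow_of_exponent_ge hs0 hs1 hA1
    have h1 : s ≤ (2*s) ^ A := by
      calc s ≤ s ^ A := e1
      _ ≤ 2 ^ A * s ^ A := le_mul_of_one_le_left (Real.rpow_nonneg hs0.le A) h2A1
      _ = (2*s) ^ A := (Real.mul_rpow (by norm_num) hs0.le).symm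
    calc (∫ t in u..v, g ⌊t⌋) ≤ s * P := hA'
    _ ≤ (2*s) ^ A * P := mul_le_mul_of_nonneg_right h1 hP
  rcases le_or_gt 2 s with hs2 | hs2
  · have h1 : ((n:ℝ)+1) ^ A ≤ (2*s) ^ A :=
      Real.rpow_le_rpow (by positivity) (by linarith) hA0
    exact hB.trans (mul_le_mul_of_nonneg_right h1 hP)
  · have hsA1 : (1:ℝ) ≤ s ^ A := Real.one_le_rpow hs1.le hA0
    by_cases hn1 : n ≤ 1
    · have hle2 : ((n:ℝ)+1) ≤ 2 := by
        have : (n:ℝ) ≤ 1 := by exact_mod_cast hn1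
        linarith
      have h1 : ((n:ℝ)+1) ^ A ≤ 2 ^ A := Real.rpow_le_rpow (by positivity) hle2 hA0
      calc (∫ t in u..v, g ⌊t⌋) ≤ ((n:ℝ)+1) ^ A * P := hB
      _ ≤ 2 ^ A * P := mul_le_mul_of_nonneg_right h1 hP
      _ ≤ 2 ^ A * s ^ A * P := by
          nlinarith [mul_nonneg (mul_nonneg (Real.rpow_nonneg (by norm_num : (0:ℝ) ≤ 2) A) hP)
            (sub_nonneg.2 hsA1)]
      _ = (2*s) ^ A * P := hfin
    · have hn2 : n = 2 := by
        have : (n:ℝ) < 3 := by linarith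
        have : n < 3 := by exact_mod_cast this
        omega
      have hm2 : (m:ℝ) = (k:ℝ) + 2 := by
        have h := hnr
        rw [hn2] at h; push_cast at h; linarith
      have hb1 : u ≤ (k:ℝ) + 1 := huk.le
      have hb2 : (k:ℝ) + 2 ≤ v := by linarith
      have hb3 : v ≤ (k:ℝ) + 3 := by linarith
      have i1e := cell_integral g k hku hb1 le_rfl
      have i1i := cell_integrable g k hku hb1 le_rfl
      have i2e : ∫ t in ((k:ℝ)+1)..((k:ℝ)+2), g ⌊t⌋ = g (k+1) := by
        have h := cell_integral g (k+1) (u := (k:ℝ)+1) (v := (k:ℝ)+2)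
          (by push_cast; linarith) (by linarith) (by push_cast; linarith)
        rw [h]; ring
      have i2i := cell_integrable g (k+1) (u := (k:ℝ)+1) (v := (k:ℝ)+2)
          (by push_cast; linarith) (by linarith) (by push_cast; linarith)
      have i3e := cell_integral g (k+2) (u := (k:ℝ)+2) (v := v)
          (by push_cast; linarith) hb2 (by push_cast; linarith)
      have i3i := cell_integrable g (k+2) (u := (k:ℝ)+2) (v := v)
          (by push_cast; linarith) hb2 (by push_cast; linarith)
      have add1 := intervalIntegral.integral_add_adjacent_intervals i1i i2i
      have add2 := intervalIntegral.integral_add_adjacent_intervals (i1i.trans i2i) i3i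
      have hIeq : (∫ t in u..v, g ⌊t⌋)
          = ((k:ℝ)+1-u) * g k + g (k+1) + (v - ((k:ℝ)+2)) * g (k+2) := by
        rw [← add2, ← add1, i1e, i2e, i3e]
      have hp1 : g k + g (k+1) ≤ 2 ^ A * P := by
        have h := H k 1
        push_cast at h
        have hIcc : Finset.Icc k (k+1) = {k, k+1} := by
          ext j; simp only [Finset.mem_Icc, Finset.mem_insert, Finset.mem_singleton]; omega
        rw [hIcc, Finset.sum_pair (by omega : k ≠ k+1)] at h
        norm_num at h
        exact h
      have hp2 : g (k+1) + g (k+2) ≤ 2 ^ A * P := by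
        have h := H (k+1) 1
        push_cast at h
        have hIcc : Finset.Icc (k+1) (k+1+1) = {k+1, k+2} := by
          ext j; simp only [Finset.mem_Icc, Finset.mem_insert, Finset.mem_singleton]; omega
        rw [hIcc, Finset.sum_pair (by omega : k+1 ≠ k+2)] at h
        norm_num at h
        exact h
      set w0 := (k:ℝ)+1-u with hw0def
      set w2 := v - ((k:ℝ)+2) with hw2def
      have hw0 : 0 ≤ w0 := by rw [hw0def]; linarith
      have hw2 : 0 ≤ w2 := by rw [hw2def]; linarith
      have hsum : w0 + w2 = s - 1 := by rw [hw0def, hw2def]; linarith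
      have hmid : g (k+1) ≤ P := hgP _
      have hconc := conc A hA0 hA1 hs1.le hs2.le
      have e1 : w0 * (g k + g (k+1)) ≤ w0 * (2 ^ A * P) := mul_le_mul_of_nonneg_left hp1 hw0
      have e2 : w2 * (g (k+1) + g (k+2)) ≤ w2 * (2 ^ A * P) := mul_le_mul_of_nonneg_left hp2 hw2
      have e3 : (2 - s) * g (k+1) ≤ (2 - s) * P := mul_le_mul_of_nonneg_left hmid (by linarith)
      have e4 : ((2 - s) + (s - 1) * 2 ^ A) * P ≤ (2 ^ A * s ^ A) * P :=
        mul_le_mul_of_nonneg_right hconc hP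
      have e5 : (w0 + w2) * (2 ^ A * P) = (s - 1) * (2 ^ A * P) := by rw [hsum]
      have e6 : (w0 + w2) * g (k+1) = (s - 1) * g (k+1) := by rw [hsum]
      rw [hIeq, ← hfin]
      linarith [e1, e2, e3, e4, e5, e6]


end Stmt4Aux

open MeasureTheory in
theorem stmt4 (p q : ℝ) (hp : 1 ≤ p) (hpq : p ≤ q) (x : ℤ → ℝ)
    (hx : dnormStar p q x ≠ ⊤) :
    dnormStar p q x ≤ mnormR p q (step x) ∧
      mnormR p q (step x) ≤ ENNReal.ofReal ((2 : ℝ) ^ (1 / p - 1 / q)) * dnormStar p q x := by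
  have hp0 : (0:ℝ) < p := lt_of_lt_of_le one_pos hp
  have hq0 : (0:ℝ) < q := lt_of_lt_of_le hp0 hpq
  set e : ℝ := 1 / q - 1 / p with he
  set θ : ℝ := 1 / p - 1 / q with hθ
  have hθ0 : 0 ≤ θ := by
    rw [hθ]
    have := one_div_le_one_div_of_le hp0 hpq
    linarith
  have heθ : e = -θ := by rw [he, hθ]; ring
  -- generic: the ENNReal supremand of dnormStar as a single ofReal
  have hterm : ∀ (k : ℤ) (n : ℕ),
      ((n + 1 : ℝ≥0∞) ^ e) * ENNReal.ofReal ((∑ j ∈ Finset.Icc k (k + n), |x j| ^ p) ^ (1 / p))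
        = ENNReal.ofReal (((n:ℝ) + 1) ^ e *
            (∑ j ∈ Finset.Icc k (k + n), |x j| ^ p) ^ (1 / p)) := by
    intro k n
    rw [Stmt4Aux.cast_enn, ENNReal.ofReal_rpow_of_pos (Stmt4Aux.npos n),
      ← ENNReal.ofReal_mul (Real.rpow_nonneg (by positivity) e)]
  have hSnn : ∀ (k : ℤ) (n : ℕ), (0:ℝ) ≤ ∑ j ∈ Finset.Icc k (k + n), |x j| ^ p :=
    fun k n => Finset.sum_nonneg fun j _ => Real.rpow_nonneg (abs_nonneg _) p
  constructor
  · -- lower bound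
    rw [dnormStar]
    refine iSup₂_le fun k n => ?_
    set S := ∑ j ∈ Finset.Icc k (k + n), |x j| ^ p with hS
    have hrmem : ((n:ℝ)+1)/2 ∈ Set.Ioi (0:ℝ) := by
      simp only [Set.mem_Ioi]; positivity
    have hint : (∫ t in ((k:ℝ) + ((n:ℝ)+1)/2 - ((n:ℝ)+1)/2)..((k:ℝ) + ((n:ℝ)+1)/2 + ((n:ℝ)+1)/2),
        |step x t| ^ p) = S := by
      have e1 : (k:ℝ) + ((n:ℝ)+1)/2 - ((n:ℝ)+1)/2 = (k:ℝ) := by ring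
      have e2 : (k:ℝ) + ((n:ℝ)+1)/2 + ((n:ℝ)+1)/2 = (k:ℝ) + ((n:ℝ)+1) := by ring
      rw [e1, e2]
      have h := Stmt4Aux.range_integral (fun j => |x j| ^ p) k n
      simpa [step] using h
    have hpick := le_iSup₂ (f := fun (a : ℝ) (r : Set.Ioi (0:ℝ)) =>
        ENNReal.ofReal ((2 * r.1) ^ e * (∫ t in (a - r.1)..(a + r.1), |step x t| ^ p) ^ (1 / p)))
      ((k:ℝ) + ((n:ℝ)+1)/2) (⟨((n:ℝ)+1)/2, hrmem⟩ : Set.Ioi (0:ℝ))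
    simp only at hpick
    rw [hint] at hpick
    rw [mnormR]
    refine le_trans (le_of_eq ?_) hpick
    rw [hterm k n]
    congr 2
    ring
  · -- upper bound
    set M' := (dnormStar p q x).toReal with hM'
    have hMeq : dnormStar p q x = ENNReal.ofReal M' := (ENNReal.ofReal_toReal hx).symm
    have hM0 : (0:ℝ) ≤ M' := ENNReal.toReal_nonneg
    set A : ℝ := θ * p with hA
    have hA0 : 0 ≤ A := mul_nonneg hθ0 hp0.le
    have hA1 : A ≤ 1 := by
      rw [hA, hθ]
      have h1 : (1/p - 1/q) * p = 1 - p/q := by field_simp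
      rw [h1]
      have : 0 ≤ p / q := by positivity
      linarith
    have Hd : ∀ (k : ℤ) (n : ℕ),
        (∑ j ∈ Finset.Icc k (k + n), |x j| ^ p) ≤ ((n:ℝ)+1) ^ A * M' ^ p := by
      intro k n
      set S := ∑ j ∈ Finset.Icc k (k + n), |x j| ^ p with hS
      have h1 : ((n + 1 : ℝ≥0∞) ^ e) * ENNReal.ofReal (S ^ (1 / p)) ≤ dnormStar p q x := by
        rw [dnormStar]
        exact le_iSup₂ (f := fun (k : ℤ) (n : ℕ) => ((n + 1 : ℝ≥0∞) ^ e) *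
          ENNReal.ofReal ((∑ j ∈ Finset.Icc k (k + n), |x j| ^ p) ^ (1 / p))) k n
      rw [hterm k n, ← hS, hMeq, ENNReal.ofReal_le_ofReal_iff hM0] at h1
      have hApos : (0:ℝ) < ((n:ℝ)+1) ^ e := Real.rpow_pos_of_pos (Stmt4Aux.npos n) e
      have h2 : S ^ (1/p) ≤ ((n:ℝ)+1) ^ θ * M' := by
        have h3 : S ^ (1/p) ≤ M' / (((n:ℝ)+1) ^ e) := (le_div_iff₀' hApos).2 h1
        have h4 : M' / (((n:ℝ)+1) ^ e) = ((n:ℝ)+1) ^ θ * M' := by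
          rw [heθ] at *
          rw [Real.rpow_neg (Stmt4Aux.npos n).le, div_eq_mul_inv, inv_inv]
          ring
        rw [h4] at h3; exact h3
      have hSid : (S ^ (1/p)) ^ p = S := by
        rw [← Real.rpow_mul (hSnn k n), one_div_mul_cancel (ne_of_gt hp0), Real.rpow_one]
      calc S = (S ^ (1/p)) ^ p := hSid.symm
      _ ≤ (((n:ℝ)+1) ^ θ * M') ^ p :=
          Real.rpow_le_rpow (Real.rpow_nonneg (hSnn k n) _) h2 hp0.le
      _ = ((n:ℝ)+1) ^ A * M' ^ p := by
          rw [Real.mul_rpow (Real.rpow_nonneg (Stmt4Aux.npos n).le θ) hM0,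
            ← Real.rpow_mul (Stmt4Aux.npos n).le, ← hA]
    rw [mnormR]
    refine iSup₂_le fun a r => ?_
    obtain ⟨r, hrmem⟩ := r
    have hr : (0:ℝ) < r := hrmem
    simp only
    set I := ∫ t in (a - r)..(a + r), |step x t| ^ p with hI
    have hIcore : I ≤ (2*(2*r)) ^ A * M' ^ p := by
      rw [hI]
      have h := Stmt4Aux.core (fun j => |x j| ^ p)
        (fun j => Real.rpow_nonneg (abs_nonneg _) p) (M' ^ p) A
        (Real.rpow_nonneg hM0 p) hA0 hA1 Hd a r hr
      simpa [step] using h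
    have hI0 : 0 ≤ I := by
      rw [hI]
      exact intervalIntegral.integral_nonneg (by linarith)
        (fun t _ => Real.rpow_nonneg (abs_nonneg _) p)
    have hs0 : (0:ℝ) < 2 * r := by linarith
    have hX0 : (0:ℝ) < 2*(2*r) := by linarith
    have hstep1 : I ^ (1/p) ≤ (2*(2*r)) ^ θ * M' := by
      have h1 : I ^ (1/p) ≤ ((2*(2*r)) ^ A * M' ^ p) ^ (1/p) :=
        Real.rpow_le_rpow hI0 hIcore (by positivity)
      have h2 : ((2*(2*r)) ^ A * M' ^ p) ^ (1/p) = (2*(2*r)) ^ θ * M' := by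
        rw [Real.mul_rpow (Real.rpow_nonneg hX0.le A) (Real.rpow_nonneg hM0 p),
          ← Real.rpow_mul hX0.le, ← Real.rpow_mul hM0]
        rw [hA]
        congr 1
        · congr 1
          field_simp
        · rw [mul_one_div, div_self (ne_of_gt hp0), Real.rpow_one]
      rw [h2] at h1; exact h1
    have hfinal : (2*r) ^ e * I ^ (1/p) ≤ 2 ^ θ * M' := by
      calc (2*r) ^ e * I ^ (1/p) ≤ (2*r) ^ e * ((2*(2*r)) ^ θ * M') := by
            apply mul_le_mul_of_nonneg_left hstep1 (Real.rpow_nonneg hs0.le e)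
      _ = 2 ^ θ * M' := by
          rw [Real.mul_rpow (by norm_num : (0:ℝ) ≤ 2) hs0.le]
          have : (2*r) ^ e * (2 ^ θ * (2*r) ^ θ * M') = 2 ^ θ * ((2*r) ^ e * (2*r) ^ θ) * M' := by
            ring
          rw [this, ← Real.rpow_add hs0, heθ]
          norm_num
    rw [hMeq, ← ENNReal.ofReal_mul (Real.rpow_nonneg (by norm_num : (0:ℝ) ≤ 2) θ)]
    exact ENNReal.ofReal_le_ofReal hfinal
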